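/- (Handelman's theorem) Let a_1,...,a_m ∈ ℝ[X] all be polynomials of degree at most 1 and suppose the polyhedron S := {x ∈ ℝ^d : a_1(x) ≥ 0,...,a_m(x) ≥ 0} is nonempty and bounded. Then every polynomial f ∈ ℝ[X] strictly positive on S belongs to the semiring cone generated by a_1,...,a_m, i.e., f is a finite sum of terms λ·a_1^{k_1}⋯a_m^{k_m} with λ ≥ 0 real and k_i nonnegative integers. -/

import Mathlib

open Finset MvPolynomial

/-- The semiring cone generated by a finite family `a : ι → ℝ[X]`: all finite sums of
terms `λ · a₁^{k₁} ⋯ a_m^{k_m}` with `λ ≥ 0` real and `kᵢ` nonnegative integers. -/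
def SCone {d : ℕ} {ι : Type*} [Fintype ι] (a : ι → MvPolynomial (Fin d) ℝ) :
    Set (MvPolynomial (Fin d) ℝ) :=
  {f | ∃ (N : ℕ) (c : Fin N → ℝ) (k : Fin N → ι → ℕ),
        (∀ j, 0 ≤ c j) ∧ f = ∑ j, C (c j) * ∏ i, a i ^ k j i}

namespace SConeAux

set_option linter.unusedSectionVars false

variable {d : ℕ} {ι : Type*} [Fintype ι] [DecidableEq ι] {a : ι → MvPolynomial (Fin d) ℝ}

lemma zero_mem : (0 : MvPolynomial (Fin d) ℝ) ∈ SCone a :=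
  ⟨0, fun _ => 0, fun _ _ => 0, fun j => le_rfl, by simp⟩

lemma C_mem {c : ℝ} (hc : 0 ≤ c) : (C c : MvPolynomial (Fin d) ℝ) ∈ SCone a :=
  ⟨1, fun _ => c, fun _ _ => 0, fun _ => hc, by simp⟩

lemma one_mem : (1 : MvPolynomial (Fin d) ℝ) ∈ SCone a := by
  simpa using C_mem (zero_le_one (α := ℝ))

lemma gen_mem (j : ι) : a j ∈ SCone a := by
  refine ⟨1, fun _ => 1, fun _ i => if i = j then 1 else 0, fun _ => zero_le_one, ?_⟩
  simp [pow_ite]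

lemma add_mem {f g : MvPolynomial (Fin d) ℝ} (hf : f ∈ SCone a) (hg : g ∈ SCone a) :
    f + g ∈ SCone a := by
  obtain ⟨N, c, k, hc, rfl⟩ := hf
  obtain ⟨N', c', k', hc', rfl⟩ := hg
  refine ⟨N + N', Fin.append c c', Fin.append k k', ?_, ?_⟩
  · intro j
    refine Fin.addCases (fun i => ?_) (fun i => ?_) j
    · rw [Fin.append_left]; exact hc i
    · rw [Fin.append_right]; exact hc' i
  · rw [Fin.sum_univ_add]
    simp [Fin.append_left, Fin.append_right]

lemma mul_mem {f g : MvPolynomial (Fin d) ℝ} (hf : f ∈ SCone a) (hg : g ∈ SCone a) :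
    f * g ∈ SCone a := by
  obtain ⟨N, c, k, hc, rfl⟩ := hf
  obtain ⟨N', c', k', hc', rfl⟩ := hg
  refine ⟨N * N',
    fun j => c (finProdFinEquiv.symm j).1 * c' (finProdFinEquiv.symm j).2,
    fun j i => k (finProdFinEquiv.symm j).1 i + k' (finProdFinEquiv.symm j).2 i,
    fun j => mul_nonneg (hc _) (hc' _), ?_⟩
  rw [Finset.sum_mul_sum]
  rw [← Equiv.sum_comp finProdFinEquiv
    (fun j : Fin (N * N') => C (c (finProdFinEquiv.symm j).1 * c' (finProdFinEquiv.symm j).2) *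
      ∏ i, a i ^ (k (finProdFinEquiv.symm j).1 i + k' (finProdFinEquiv.symm j).2 i))]
  simp only [Equiv.symm_apply_apply]
  rw [Fintype.sum_prod_type]
  apply Finset.sum_congr rfl
  intro p _
  apply Finset.sum_congr rfl
  intro q _
  simp only [map_mul, pow_add, Finset.prod_mul_distrib]
  ring

lemma sum_mem {γ : Type*} (s : Finset γ) (g : γ → MvPolynomial (Fin d) ℝ)
    (h : ∀ x ∈ s, g x ∈ SCone a) : (∑ x ∈ s, g x) ∈ SCone a := by
  classical
  induction s using Finset.induction_on with
  | empty => simpa using zero_mem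
  | insert _ _ hx ih =>
    rw [Finset.sum_insert hx]
    exact add_mem (h _ (Finset.mem_insert_self _ _))
      (ih fun x hxs => h x (Finset.mem_insert_of_mem hxs))

lemma pow_mem {f : MvPolynomial (Fin d) ℝ} (hf : f ∈ SCone a) (n : ℕ) : f ^ n ∈ SCone a := by
  induction n with
  | zero => simpa using one_mem
  | succ n ih => rw [pow_succ]; exact mul_mem ih hf

lemma prod_mem {γ : Type*} (s : Finset γ) (g : γ → MvPolynomial (Fin d) ℝ)
    (h : ∀ x ∈ s, g x ∈ SCone a) : (∏ x ∈ s, g x) ∈ SCone a := by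
  classical
  induction s using Finset.induction_on with
  | empty => simpa using one_mem
  | insert _ _ hx ih =>
    rw [Finset.prod_insert hx]
    exact mul_mem (h _ (Finset.mem_insert_self _ _))
      (ih fun x hxs => h x (Finset.mem_insert_of_mem hxs))

end SConeAux


-- classification of monomials of degree ≤ 1
lemma deg_le_one_classify {d : ℕ} (v : Fin d →₀ ℕ) (hv : (v.sum fun _ e => e) ≤ 1) :
    v = 0 ∨ ∃ i, v = Finsupp.single i 1 := by
  rcases eq_or_ne v 0 with h | h
  · exact Or.inl h
  · right
    obtain ⟨i, hi⟩ := Finsupp.ne_iff.mp h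
    rw [Finsupp.coe_zero, Pi.zero_apply] at hi
    have hisup : i ∈ v.support := Finsupp.mem_support_iff.mpr hi
    have hsum : (v.sum fun _ e => e) = ∑ j ∈ v.support, v j := rfl
    have hvi : v i ≤ 1 := by
      calc v i ≤ ∑ j ∈ v.support, v j := Finset.single_le_sum (fun j _ => Nat.zero_le _) hisup
      _ ≤ 1 := by rw [← hsum]; exact hv
    have hvi1 : v i = 1 := le_antisymm hvi (Nat.one_le_iff_ne_zero.mpr hi)
    refine ⟨i, ?_⟩
    rw [Finsupp.eq_single_iff]
    refine ⟨?_, hvi1⟩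
    intro j hj
    simp only [Finset.mem_singleton]
    by_contra hji
    have hjsup : v j ≠ 0 := Finsupp.mem_support_iff.mp hj
    have : 2 ≤ ∑ j ∈ v.support, v j := by
      have h2 : v i + v j ≤ ∑ j ∈ v.support, v j := by
        rw [← Finset.sum_pair (Ne.symm hji)]
        apply Finset.sum_le_sum_of_subset
        intro x hx
        simp only [Finset.mem_insert, Finset.mem_singleton] at hx
        rcases hx with rfl | rfl
        · exact hisup
        · exact hj
      omega
    omega

lemma affine_decomp {d : ℕ} (p : MvPolynomial (Fin d) ℝ) (hp : p.totalDegree ≤ 1) :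
    p = C (coeff 0 p) + ∑ i, C (coeff (Finsupp.single i 1) p) * X i := by
  classical
  apply MvPolynomial.ext
  intro v
  rw [coeff_add, coeff_C, coeff_sum]
  simp only [coeff_C_mul, coeff_X', mul_ite, mul_one, mul_zero]
  by_cases h0 : v = 0
  · subst h0
    simp [Finsupp.single_eq_zero]
  · by_cases h1 : ∃ i, v = Finsupp.single i 1
    · obtain ⟨i0, rfl⟩ := h1
      rw [if_neg (fun h => h0 h.symm)]
      rw [Finset.sum_eq_single i0
        (fun i _ hne => if_neg (fun h => hne ((Finsupp.single_left_inj one_ne_zero).mp h)))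
        (fun h => absurd (Finset.mem_univ i0) h)]
      rw [if_pos rfl, zero_add]
    · have hns : coeff v p = 0 := by
        rw [← MvPolynomial.notMem_support_iff]
        intro hmem
        have := deg_le_one_classify v (le_trans (le_totalDegree hmem) hp)
        rcases this with h | ⟨i, hi⟩
        · exact h0 h
        · exact h1 ⟨i, hi⟩
      rw [hns, if_neg (fun h => h0 h.symm)]
      rw [Finset.sum_eq_zero]
      · simp
      · intro i _
        rw [if_neg (fun h => h1 ⟨i, h.symm⟩)]

lemma duality {d m : ℕ} (L : Fin m → Fin d → ℝ)
    (hrec : ∀ v : Fin d → ℝ, (∀ j, 0 ≤ ∑ i, L j i * v i) → v = 0) (w : Fin d → ℝ) :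
    ∃ μ : Fin m → ℝ, (∀ j, 0 ≤ μ j) ∧ w = ∑ j, μ j • L j := by
  classical
  set CC : Set (Fin d → ℝ) := {z | ∃ μ : Fin m → ℝ, (∀ j, 0 ≤ μ j) ∧ z = ∑ j, μ j • L j} with hCC
  have hconv : Convex ℝ CC := by
    rintro z1 ⟨μ1, hμ1, rfl⟩ z2 ⟨μ2, hμ2, rfl⟩ s t hs ht hst
    refine ⟨fun j => s * μ1 j + t * μ2 j,
      fun j => add_nonneg (mul_nonneg hs (hμ1 j)) (mul_nonneg ht (hμ2 j)), ?_⟩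
    rw [Finset.smul_sum, Finset.smul_sum, ← Finset.sum_add_distrib]
    apply Finset.sum_congr rfl
    intro j _
    simp only [add_smul, mul_smul]
  have hzero : (0 : Fin d → ℝ) ∈ CC := ⟨0, fun _ => le_rfl, by simp⟩
  have hLj : ∀ j, L j ∈ CC := by
    intro j
    refine ⟨fun j' => if j' = j then 1 else 0, fun j' => by positivity, ?_⟩
    simp [ite_smul]
  have hsmulmem : ∀ (t : ℝ), 0 ≤ t → ∀ z ∈ CC, t • z ∈ CC := by
    rintro t ht z ⟨μ, hμ, rfl⟩
    exact ⟨fun j => t * μ j, fun j => mul_nonneg ht (hμ j), by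
      rw [Finset.smul_sum]; apply Finset.sum_congr rfl; intro j _; rw [mul_smul]⟩
  -- closure CC = univ
  have hclos : closure CC = Set.univ := by
    rw [Set.eq_univ_iff_forall]
    intro w'
    by_contra hw
    obtain ⟨f, u, hfw, hfb⟩ :=
      geometric_hahn_banach_point_closed (hconv.closure) isClosed_closure hw
    have hu0 : u < 0 := by
      have := hfb 0 (subset_closure hzero)
      simpa using this
    have hfL : ∀ j, 0 ≤ f (L j) := by
      intro j
      by_contra hneg
      push_neg at hneg
      obtain ⟨t, ht, htneg⟩ : ∃ t : ℝ, 0 ≤ t ∧ t * f (L j) < u := by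
        refine ⟨(u - 1) / f (L j), ?_, ?_⟩
        · exact div_nonneg_iff.mpr (Or.inr ⟨by linarith, le_of_lt hneg⟩)
        · rw [div_mul_cancel₀]
          · linarith
          · exact ne_of_lt hneg
      have := hfb (t • L j) (subset_closure (hsmulmem t ht _ (hLj j)))
      rw [map_smul, smul_eq_mul] at this
      linarith
    set v : Fin d → ℝ := fun i => f (fun j' => if i = j' then 1 else 0) with hv
    have hfz : ∀ z : Fin d → ℝ, f z = ∑ i, z i * v i := by
      intro z
      conv_lhs => rw [pi_eq_sum_univ z]
      rw [map_sum]
      apply Finset.sum_congr rfl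
      intro i _
      rw [map_smul, smul_eq_mul]
    have hv0 : v = 0 := by
      apply hrec
      intro j
      rw [← hfz]
      exact hfL j
    have : f w' = 0 := by rw [hfz, hv0]; simp
    linarith
  -- affine span is top
  have hspan : affineSpan ℝ CC = ⊤ := by
    have h1 : (affineSpan ℝ CC : Set (Fin d → ℝ)) = Set.univ := by
      apply Set.eq_univ_of_univ_subset
      rw [← hclos]
      have : IsClosed (affineSpan ℝ CC : Set (Fin d → ℝ)) :=
        AffineSubspace.closed_of_finiteDimensional _
      calc closure CC ⊆ closure (affineSpan ℝ CC : Set (Fin d → ℝ)) :=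
            closure_mono (subset_affineSpan ℝ CC)
        _ = _ := this.closure_eq
    exact (AffineSubspace.coe_eq_univ_iff _).mp h1
  have hint : (interior CC).Nonempty := (hconv.interior_nonempty_iff_affineSpan_eq_top).mpr hspan
  obtain ⟨z, hz⟩ := hint
  have hwCC : w ∈ CC := by
    have hy : ((2:ℝ) • w - z) ∈ closure CC := by rw [hclos]; trivial
    have hcombo := hconv.combo_interior_closure_mem_interior hz hy
      (by norm_num : (0:ℝ) < 1/2) (by norm_num : (0:ℝ) ≤ 1/2) (by norm_num)
    have : (1/2 : ℝ) • z + (1/2 : ℝ) • ((2:ℝ) • w - z) = w := by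
      module
    rw [this] at hcombo
    exact interior_subset hcombo
  exact hwCC.imp fun μ h => ⟨h.1, h.2⟩


lemma abs_prod_sub_prod_le {γ : Type*} (s : Finset γ) (u v : γ → ℝ)
    (hu : ∀ t ∈ s, |u t| ≤ 1) (hv : ∀ t ∈ s, |v t| ≤ 1) :
    |∏ t ∈ s, u t - ∏ t ∈ s, v t| ≤ ∑ t ∈ s, |u t - v t| := by
  induction s using Finset.cons_induction with
  | empty => simp
  | cons a s ha ih =>
    rw [Finset.prod_cons, Finset.prod_cons, Finset.sum_cons]
    have h1 := ih (fun t ht => hu t (Finset.mem_cons_of_mem ht))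
      (fun t ht => hv t (Finset.mem_cons_of_mem ht))
    have hua : |u a| ≤ 1 := hu a (Finset.mem_cons_self a s)
    have hpv : |∏ t ∈ s, v t| ≤ 1 := by
      rw [Finset.abs_prod]
      exact Finset.prod_le_one (fun _ _ => abs_nonneg _)
        (fun t ht => hv t (Finset.mem_cons_of_mem ht))
    calc |u a * ∏ t ∈ s, u t - v a * ∏ t ∈ s, v t|
        = |u a * (∏ t ∈ s, u t - ∏ t ∈ s, v t) + (u a - v a) * ∏ t ∈ s, v t| := by ring_nf
      _ ≤ |u a * (∏ t ∈ s, u t - ∏ t ∈ s, v t)| + |(u a - v a) * ∏ t ∈ s, v t| := abs_add_le _ _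
      _ = |u a| * |∏ t ∈ s, u t - ∏ t ∈ s, v t| + |u a - v a| * |∏ t ∈ s, v t| := by
          rw [abs_mul, abs_mul]
      _ ≤ 1 * (∑ t ∈ s, |u t - v t|) + |u a - v a| * 1 := by
          gcongr
      _ ≤ |u a - v a| + ∑ t ∈ s, |u t - v t| := by rw [one_mul, mul_one]; linarith

lemma cast_descFactorial (b a : ℕ) :
    ((b.descFactorial a : ℕ) : ℝ) = ∏ i ∈ Finset.range a, ((b : ℝ) - i) := by
  rcases le_or_gt a b with h | h
  · rw [Nat.descFactorial_eq_prod_range, Nat.cast_prod]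
    apply Finset.prod_congr rfl
    intro i hi
    rw [Nat.cast_sub (le_trans (le_of_lt (Finset.mem_range.mp hi)) h)]
  · rw [Nat.descFactorial_eq_zero_iff_lt.mpr h, Nat.cast_zero]
    symm
    apply Finset.prod_eq_zero (Finset.mem_range.mpr h)
    simp

lemma coeff_T_pow {m : ℕ} (N : ℕ) (γ : Fin m →₀ ℕ) :
    coeff γ ((∑ k, X k : MvPolynomial (Fin m) ℝ) ^ N)
      = if (∑ k, γ k) = N then (Nat.multinomial Finset.univ γ : ℝ) else 0 := by
  classical
  rw [Finset.sum_pow_eq_sum_piAntidiag, coeff_sum]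
  have hterm : ∀ k : Fin m → ℕ,
      coeff γ ((Nat.multinomial Finset.univ k : MvPolynomial (Fin m) ℝ) * ∏ i, X i ^ k i)
        = if Finsupp.equivFunOnFinite.symm k = γ then (Nat.multinomial Finset.univ k : ℝ) else 0 := by
    intro k
    have h1 : (∏ i, (X i : MvPolynomial (Fin m) ℝ) ^ k i)
        = monomial (Finsupp.equivFunOnFinite.symm k) 1 := by
      rw [← prod_X_pow_eq_monomial]
      symm
      apply Finset.prod_subset (Finset.subset_univ _)
      intro x _ hx
      show (X x : MvPolynomial (Fin m) ℝ) ^ (Finsupp.equivFunOnFinite.symm k) x = 1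
      rw [Finsupp.notMem_support_iff.mp hx, pow_zero]
    have h2 : ((Nat.multinomial Finset.univ k : ℕ) : MvPolynomial (Fin m) ℝ)
        = C ((Nat.multinomial Finset.univ k : ℕ) : ℝ) := by
      simp
    rw [h1, h2, coeff_C_mul, coeff_monomial]
    split_ifs <;> simp
  rw [Finset.sum_congr rfl (fun k _ => hterm k)]
  by_cases h : (∑ k, γ k) = N
  · rw [if_pos h]
    rw [Finset.sum_eq_single (⇑γ : Fin m → ℕ)]
    · rw [if_pos (Finsupp.equivFunOnFinite_symm_coe γ)]
    · intro k hk hne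
      rw [if_neg]
      intro heq
      apply hne
      rw [← heq]
      rfl
    · intro habs
      exfalso
      apply habs
      rw [Finset.mem_piAntidiag]
      exact ⟨h, fun i _ => Finset.mem_univ i⟩
  · rw [if_neg h]
    apply Finset.sum_eq_zero
    intro k hk
    rw [if_neg]
    intro heq
    apply h
    rw [Finset.mem_piAntidiag] at hk
    rw [← heq] at *
    simpa using hk.1


lemma degree_eq_sum_univ {m : ℕ} (γ : Fin m →₀ ℕ) : γ.degree = ∑ k, γ k :=
  Finset.sum_subset (Finset.subset_univ _) (fun x _ hx => Finsupp.notMem_support_iff.mp hx)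

lemma polya {m n : ℕ} (hm : 0 < m) (G : MvPolynomial (Fin m) ℝ) (hG : G.IsHomogeneous n)
    (hpos : ∀ y : Fin m → ℝ, (∀ k, 0 ≤ y k) → (∑ k, y k) = 1 → 0 < eval y G) :
    ∃ N : ℕ, ∀ β : Fin m →₀ ℕ,
      0 ≤ coeff β ((∑ k, X k : MvPolynomial (Fin m) ℝ) ^ N * G) := by
  classical
  set T : MvPolynomial (Fin m) ℝ := ∑ k, X k with hT
  set Δ : Set (Fin m → ℝ) := {y | (∀ k, 0 ≤ y k) ∧ ∑ k, y k = 1} with hΔdef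
  have hΔcl : IsClosed Δ := by
    have h1 : Δ = (⋂ k, {y : Fin m → ℝ | 0 ≤ y k}) ∩ {y : Fin m → ℝ | ∑ k, y k = 1} := by
      ext y; simp [hΔdef, Set.mem_iInter]
    rw [h1]
    exact IsClosed.inter (isClosed_iInter fun k => isClosed_le continuous_const (continuous_apply k))
      (isClosed_eq (continuous_finset_sum _ fun k _ => continuous_apply k) continuous_const)
  have hΔbd : Bornology.IsBounded Δ := by
    rw [Metric.isBounded_iff_subset_closedBall 0]
    refine ⟨1, fun y hy => ?_⟩
    rw [Metric.mem_closedBall, dist_zero_right]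
    rw [pi_norm_le_iff_of_nonneg zero_le_one]
    intro k
    rw [Real.norm_eq_abs, abs_le]
    constructor
    · linarith [hy.1 k]
    · calc y k ≤ ∑ k', y k' :=
          Finset.single_le_sum (fun k' _ => hy.1 k') (Finset.mem_univ k)
        _ = 1 := hy.2
  have hΔcompact : IsCompact Δ := Metric.isCompact_of_isClosed_isBounded hΔcl hΔbd
  have hΔne : Δ.Nonempty := by
    refine ⟨fun _ => (m : ℝ)⁻¹, fun k => by positivity, ?_⟩
    rw [Finset.sum_const, Finset.card_univ, Fintype.card_fin, nsmul_eq_mul]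
    field_simp
  obtain ⟨y0, hy0, hmin'⟩ := hΔcompact.exists_isMinOn hΔne
    ((MvPolynomial.continuous_eval G).continuousOn)
  have hmin : ∀ y ∈ Δ, eval y0 G ≤ eval y G := fun y hy => hmin' hy
  set ε := eval y0 G with hεdef
  have hεpos : 0 < ε := hpos y0 hy0.1 hy0.2
  set A := ∑ α ∈ G.support, |coeff α G| with hAdef
  have hAnn : 0 ≤ A := Finset.sum_nonneg fun _ _ => abs_nonneg _
  obtain ⟨N0, hN0⟩ := exists_nat_gt (A * (n : ℝ) ^ 2 / ε)
  refine ⟨N0 + 1, ?_⟩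
  intro β
  set N := N0 + 1 with hNdef
  set s := N + n with hsdef
  have hThom : T.IsHomogeneous 1 := by
    apply MvPolynomial.IsHomogeneous.sum
    intro k _
    exact isHomogeneous_X _ _
  have hshom : (T ^ N * G).IsHomogeneous s := by
    have := (hThom.pow N).mul hG
    simpa using this
  by_cases hβdeg : (∑ k, β k) = s
  case neg =>
    rw [hshom.coeff_eq_zero (by rw [degree_eq_sum_univ β]; exact hβdeg)]
  case pos =>
  have hβk : ∀ k, β k ≤ s := fun k => by
    calc β k ≤ ∑ k', β k' := Finset.single_le_sum (fun _ _ => Nat.zero_le _) (Finset.mem_univ k)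
      _ = s := hβdeg
  have hsupp_deg : ∀ α ∈ G.support, (∑ k, α k) = n := by
    intro α hα
    have h := hG (MvPolynomial.mem_support_iff.mp hα)
    rw [← degree_eq_sum_univ α, Finsupp.degree_eq_weight_one]
    exact h
  -- the key identity
  have hid : coeff β (T ^ N * G) * ∏ k, ((β k).factorial : ℝ)
      = (N.factorial : ℝ) * ∑ α ∈ G.support, coeff α G * ∏ k, ((β k).descFactorial (α k) : ℝ) := by
    have hsplit : T ^ N * G = ∑ α ∈ G.support, T ^ N * monomial α (coeff α G) := by
      rw [← Finset.mul_sum, ← G.as_sum]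
    rw [hsplit, coeff_sum, Finset.sum_mul, Finset.mul_sum]
    apply Finset.sum_congr rfl
    intro α hα
    rw [coeff_mul_monomial']
    by_cases hle : α ≤ β
    · have hlek : ∀ k, α k ≤ β k := fun k => hle k
      rw [if_pos hle, coeff_T_pow]
      have hsub : (∑ k, (β - α) k) = N := by
        have h1 : (∑ k, ((β - α) k + α k)) = ∑ k, β k := by
          apply Finset.sum_congr rfl
          intro k _
          rw [Finsupp.tsub_apply]
          have := hlek k
          omega
        rw [Finset.sum_add_distrib] at h1
        have h2 := hsupp_deg α hα
        omega
      rw [if_pos hsub]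
      have hnat : (Nat.multinomial Finset.univ ⇑(β - α)) * ∏ k, (β k).factorial
          = N.factorial * ∏ k, (β k).descFactorial (α k) := by
        have h1 : ∀ k, (β k).factorial = (β k).descFactorial (α k) * ((β - α) k).factorial :=
          fun k => by
            rw [Finsupp.tsub_apply, mul_comm, Nat.factorial_mul_descFactorial (hlek k)]
        calc (Nat.multinomial Finset.univ ⇑(β - α)) * ∏ k, (β k).factorial
            = (Nat.multinomial Finset.univ ⇑(β - α)) *
              ∏ k, ((β k).descFactorial (α k) * ((β - α) k).factorial) := by
              rw [Finset.prod_congr rfl fun k _ => h1 k]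
          _ = (∏ k, (β k).descFactorial (α k)) *
              ((∏ k, ((β - α) k).factorial) * Nat.multinomial Finset.univ ⇑(β - α)) := by
              rw [Finset.prod_mul_distrib]
              ring
          _ = (∏ k, (β k).descFactorial (α k)) * (∑ k, (β - α) k).factorial := by
              rw [Nat.multinomial_spec]
          _ = N.factorial * ∏ k, (β k).descFactorial (α k) := by rw [hsub, mul_comm]
      have hcast : ((Nat.multinomial Finset.univ ⇑(β - α) : ℕ) : ℝ) * ∏ k, ((β k).factorial : ℝ)
          = (N.factorial : ℝ) * ∏ k, ((β k).descFactorial (α k) : ℝ) := by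
        rw [← Nat.cast_prod, ← Nat.cast_prod, ← Nat.cast_mul, ← Nat.cast_mul, hnat]
      linear_combination (coeff α G) * hcast
    · rw [if_neg hle, zero_mul]
      have : ∃ k, β k < α k := by
        by_contra hcon
        push_neg at hcon
        exact hle (fun k => hcon k)
      obtain ⟨k, hk⟩ := this
      rw [Finset.prod_eq_zero (Finset.mem_univ k)
        (by rw [Nat.descFactorial_eq_zero_iff_lt.mpr hk, Nat.cast_zero])]
      rw [mul_zero, mul_zero]
  -- positivity of the sum
  have hspos : (0 : ℝ) < (s : ℝ) := by
    have : 0 < s := by omega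
    exact_mod_cast this
  set y : Fin m → ℝ := fun k => (β k : ℝ) / s with hydef
  have hyk : ∀ k, 0 ≤ y k ∧ y k ≤ 1 := by
    intro k
    constructor
    · positivity
    · rw [hydef, div_le_one hspos]
      exact_mod_cast hβk k
  have hyΔ : y ∈ Δ := by
    refine ⟨fun k => (hyk k).1, ?_⟩
    rw [hydef, ← Finset.sum_div]
    rw [show (∑ k, ((β k : ℕ) : ℝ)) = ((∑ k, β k : ℕ) : ℝ) by push_cast; ring]
    rw [hβdeg]
    field_simp
  have hclaim : ∀ α ∈ G.support,
      |(∏ k, ((β k).descFactorial (α k) : ℝ)) / (s : ℝ) ^ n - ∏ k, y k ^ α k|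
        ≤ (n : ℝ) ^ 2 / s := by
    intro α hα
    have hαn := hsupp_deg α hα
    have hαk : ∀ k, α k ≤ n := fun k => by
      calc α k ≤ ∑ k', α k' := Finset.single_le_sum (fun _ _ => Nat.zero_le _) (Finset.mem_univ k)
        _ = n := hαn
    have hns : (n : ℝ) ≤ s := by
      have : n ≤ s := by omega
      exact_mod_cast this
    have hfac1 : ∀ k, ∀ i ∈ Finset.range (α k), |(((β k) : ℝ) - i) / s| ≤ 1 := by
      intro k i hi
      rw [abs_div, abs_of_pos hspos, div_le_one hspos, abs_le]
      have h1 : (0 : ℝ) ≤ (β k : ℝ) := Nat.cast_nonneg _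
      have h2 : (β k : ℝ) ≤ s := by exact_mod_cast hβk k
      have h3 : (i : ℝ) < n := by
        have : i < α k := Finset.mem_range.mp hi
        have : i < n := lt_of_lt_of_le this (hαk k)
        exact_mod_cast this
      constructor <;> linarith
    have hP1 : (∏ k, ((β k).descFactorial (α k) : ℝ)) / (s : ℝ) ^ n
        = ∏ k, ∏ i ∈ Finset.range (α k), ((((β k) : ℝ) - i) / s) := by
      rw [← hαn, ← Finset.prod_pow_eq_pow_sum, ← Finset.prod_div_distrib]
      apply Finset.prod_congr rfl
      intro k _
      rw [cast_descFactorial]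
      rw [Finset.prod_div_distrib, Finset.prod_const, Finset.card_range]
    have hP2 : ∀ k, y k ^ α k = ∏ i ∈ Finset.range (α k), ((β k : ℝ) / s) := by
      intro k
      rw [Finset.prod_const, Finset.card_range]
    have hink : ∀ k, |∏ i ∈ Finset.range (α k), ((((β k) : ℝ) - i) / s) - y k ^ α k|
        ≤ (α k : ℝ) * ((n : ℝ) / s) := by
      intro k
      rw [hP2 k]
      refine le_trans (abs_prod_sub_prod_le _ _ _ (hfac1 k) (fun i _ => ?_)) ?_
      · rw [abs_div, abs_of_pos hspos, div_le_one hspos, abs_of_nonneg (Nat.cast_nonneg _)]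
        exact_mod_cast hβk k
      · calc ∑ i ∈ Finset.range (α k), |(((β k) : ℝ) - i) / s - (β k : ℝ) / s|
            ≤ ∑ _i ∈ Finset.range (α k), (n : ℝ) / s := by
              apply Finset.sum_le_sum
              intro i hi
              rw [div_sub_div_same, show (((β k) : ℝ) - i - (β k : ℝ)) = -i by ring, abs_div,
                abs_of_pos hspos, abs_neg, abs_of_nonneg (Nat.cast_nonneg _)]
              have h10 : (i : ℝ) ≤ (n : ℝ) := by
                exact_mod_cast le_trans (le_of_lt (Finset.mem_range.mp hi)) (hαk k)
              gcongr
          _ = (α k : ℝ) * ((n : ℝ) / s) := by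
              rw [Finset.sum_const, Finset.card_range, nsmul_eq_mul]
    have houter : |(∏ k, ∏ i ∈ Finset.range (α k), ((((β k) : ℝ) - i) / s)) - ∏ k, y k ^ α k|
        ≤ ∑ k, (α k : ℝ) * ((n : ℝ) / s) := by
      refine le_trans (abs_prod_sub_prod_le _ _ _ (fun k _ => ?_) (fun k _ => ?_))
        (Finset.sum_le_sum fun k _ => hink k)
      · rw [Finset.abs_prod]
        exact Finset.prod_le_one (fun _ _ => abs_nonneg _) (fun i hi => hfac1 k i hi)
      · rw [abs_pow]
        apply pow_le_one₀ (abs_nonneg _)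
        rw [abs_of_nonneg (hyk k).1]
        exact (hyk k).2
    rw [hP1]
    refine le_trans houter ?_
    rw [← Finset.sum_mul,
      show (∑ k, (α k : ℝ)) = ((∑ k, α k : ℕ) : ℝ) by push_cast; ring, hαn]
    exact le_of_eq (by ring)
  -- final assembly
  have hkey : 0 < ∑ α ∈ G.support, coeff α G * ∏ k, ((β k).descFactorial (α k) : ℝ) := by
    have heq : ∑ α ∈ G.support, coeff α G * ∏ k, ((β k).descFactorial (α k) : ℝ)
        = (s : ℝ) ^ n * ∑ α ∈ G.support,
            coeff α G * ((∏ k, ((β k).descFactorial (α k) : ℝ)) / (s : ℝ) ^ n) := by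
      rw [Finset.mul_sum]
      apply Finset.sum_congr rfl
      intro α _
      field_simp
    have h2 : ∀ α ∈ G.support,
        coeff α G * (∏ k, y k ^ α k) - |coeff α G| * ((n : ℝ) ^ 2 / s)
          ≤ coeff α G * ((∏ k, ((β k).descFactorial (α k) : ℝ)) / (s : ℝ) ^ n) := by
      intro α hα
      have hcl := hclaim α hα
      set D := (∏ k, ((β k).descFactorial (α k) : ℝ)) / (s : ℝ) ^ n with hD
      set P := ∏ k, y k ^ α k with hP
      have habs : |coeff α G * (D - P)| ≤ |coeff α G| * ((n : ℝ) ^ 2 / s) := by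
        rw [abs_mul]
        exact mul_le_mul_of_nonneg_left hcl (abs_nonneg _)
      have := neg_abs_le (coeff α G * (D - P))
      nlinarith [mul_sub (coeff α G) D P]
    have h3 : eval y G - A * ((n : ℝ) ^ 2 / s)
        ≤ ∑ α ∈ G.support, coeff α G * ((∏ k, ((β k).descFactorial (α k) : ℝ)) / (s : ℝ) ^ n) := by
      have h4 := Finset.sum_le_sum h2
      rw [Finset.sum_sub_distrib] at h4
      rw [← Finset.sum_mul] at h4
      rw [eval_eq' y G]
      exact le_trans (le_of_eq (by rw [hAdef])) h4
    have h6 : ε ≤ eval y G := hmin y hyΔ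
    have h7 : A * ((n : ℝ) ^ 2 / s) < ε := by
      rw [← mul_div_assoc, div_lt_iff₀ hspos]
      have hN0s : (N0 : ℝ) ≤ (s : ℝ) := by
        have : N0 ≤ s := by omega
        exact_mod_cast this
      have h8 : A * (n : ℝ) ^ 2 < N0 * ε := by
        rw [div_lt_iff₀ hεpos] at hN0
        linarith
      calc A * (n : ℝ) ^ 2 < N0 * ε := h8
        _ ≤ s * ε := by nlinarith
        _ = ε * s := mul_comm _ _
    rw [heq]
    apply mul_pos (by positivity)
    calc (0 : ℝ) < ε - A * ((n : ℝ) ^ 2 / s) := by linarith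
      _ ≤ _ := by linarith
  have hfacpos : (0 : ℝ) < ∏ k, ((β k).factorial : ℝ) := by
    apply Finset.prod_pos
    intro k _
    exact_mod_cast Nat.factorial_pos _
  have h8 : 0 < coeff β (T ^ N * G) * ∏ k, ((β k).factorial : ℝ) := by
    rw [hid]
    apply mul_pos _ hkey
    exact_mod_cast Nat.factorial_pos N
  nlinarith [h8, hfacpos]


-- generic affine combination lemma
lemma comb {D M : ℕ} (cc : Fin M → ℝ) (LL : Fin M → Fin D → ℝ) (ν : Fin M → ℝ) :
    ∑ j, C (ν j) * (C (cc j) + ∑ i, C (LL j i) * X i)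
      = C (∑ j, ν j * cc j) + ∑ i, C (∑ j, ν j * LL j i) * (X i : MvPolynomial (Fin D) ℝ) := by
  simp only [mul_add, Finset.mul_sum]
  rw [Finset.sum_add_distrib]
  congr 1
  · rw [map_sum C (fun j => ν j * cc j) Finset.univ]
    apply Finset.sum_congr rfl
    intro j _
    rw [← C_mul]
  · rw [Finset.sum_comm]
    apply Finset.sum_congr rfl
    intro i _
    rw [map_sum C (fun j => ν j * LL j i) Finset.univ, Finset.sum_mul]
    apply Finset.sum_congr rfl
    intro j _
    rw [← mul_assoc, ← C_mul]

-- aeval composition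
lemma aeval_comp {D M E : ℕ} (p : Fin M → MvPolynomial (Fin E) ℝ)
    (q : Fin D → MvPolynomial (Fin M) ℝ) (f : MvPolynomial (Fin D) ℝ) :
    aeval p (aeval q f) = aeval (fun i => aeval p (q i)) f := by
  induction f using MvPolynomial.induction_on with
  | C r => simp only [aeval_C, MvPolynomial.algebraMap_eq]
  | add f g hf hg => simp only [map_add, hf, hg]
  | mul_X f i hf => simp only [map_mul, hf, aeval_X]

lemma eval_aeval {D M : ℕ} (x : Fin M → ℝ) (q : Fin D → MvPolynomial (Fin M) ℝ)
    (f : MvPolynomial (Fin D) ℝ) :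
    eval x (aeval q f) = eval (fun k => eval x (q k)) f := by
  induction f using MvPolynomial.induction_on with
  | C r => simp only [aeval_C, MvPolynomial.algebraMap_eq, eval_C]
  | add f g hf hg => simp only [map_add, hf, hg]
  | mul_X f i hf => simp only [map_mul, hf, aeval_X, eval_X]

set_option maxHeartbeats 2000000 in
theorem handelman (d m : ℕ) (a : Fin m → MvPolynomial (Fin d) ℝ)
    (ha : ∀ j, (a j).totalDegree ≤ 1)
    (hne : {x : Fin d → ℝ | ∀ j, 0 ≤ eval x (a j)}.Nonempty)
    (hbdd : Bornology.IsBounded {x : Fin d → ℝ | ∀ j, 0 ≤ eval x (a j)})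
    (f : MvPolynomial (Fin d) ℝ)
    (hf : ∀ x : Fin d → ℝ, (∀ j, 0 ≤ eval x (a j)) → 0 < eval x f) :
    f ∈ SCone a := by
  classical
  obtain ⟨x0, hx0⟩ := hne
  set L : Fin m → Fin d → ℝ := fun j i => coeff (Finsupp.single i 1) (a j) with hLdef
  set c : Fin m → ℝ := fun j => coeff 0 (a j) with hcdef
  have hdecomp : ∀ j, a j = C (c j) + ∑ i, C (L j i) * X i := fun j => affine_decomp (a j) (ha j)
  have heval : ∀ (x : Fin d → ℝ) j, eval x (a j) = c j + ∑ i, L j i * x i := by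
    intro x j
    conv_lhs => rw [hdecomp j]
    simp
  -- recession cone is trivial
  have hrec : ∀ v : Fin d → ℝ, (∀ j, 0 ≤ ∑ i, L j i * v i) → v = 0 := by
    intro v hv
    by_contra hv0
    obtain ⟨R, hR⟩ := hbdd.exists_norm_le
    have hRnn : 0 ≤ R := le_trans (norm_nonneg _) (hR x0 hx0)
    have hmem : ∀ tt : ℝ, 0 ≤ tt →
        (fun i => x0 i + tt * v i) ∈ {x : Fin d → ℝ | ∀ j, 0 ≤ eval x (a j)} := by
      intro tt htt j
      rw [heval]
      have h1 : ∑ i, L j i * (x0 i + tt * v i)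
          = (∑ i, L j i * x0 i) + tt * ∑ i, L j i * v i := by
        rw [Finset.mul_sum, ← Finset.sum_add_distrib]
        apply Finset.sum_congr rfl
        intro i _
        ring
      have h2 : 0 ≤ c j + ∑ i, L j i * x0 i := by rw [← heval]; exact hx0 j
      have h3 : 0 ≤ tt * ∑ i, L j i * v i := mul_nonneg htt (hv j)
      rw [h1]
      linarith
    obtain ⟨i0, hi0⟩ : ∃ i, v i ≠ 0 := by
      by_contra h
      push_neg at h
      exact hv0 (funext h)
    have hvpos : 0 < |v i0| := abs_pos.mpr hi0
    set tt := (R + |x0 i0| + 1) / |v i0| with httdef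
    have htt : 0 ≤ tt := by positivity
    have h4 := hR _ (hmem tt htt)
    have h5 : |x0 i0 + tt * v i0| ≤ R := by
      have h5a := norm_le_pi_norm (fun i => x0 i + tt * v i : Fin d → ℝ) i0
      rw [Real.norm_eq_abs] at h5a
      exact le_trans h5a h4
    have h6 : tt * |v i0| = R + |x0 i0| + 1 := div_mul_cancel₀ _ (ne_of_gt hvpos)
    have h7 : |tt * v i0| ≤ |x0 i0 + tt * v i0| + |x0 i0| := by
      calc |tt * v i0| = |(x0 i0 + tt * v i0) + (-(x0 i0))| := by ring_nf
        _ ≤ |x0 i0 + tt * v i0| + |(-(x0 i0))| := abs_add_le _ _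
        _ = |x0 i0 + tt * v i0| + |x0 i0| := by rw [abs_neg]
    rw [abs_mul, abs_of_nonneg htt, h6] at h7
    linarith
  -- positive combination with zero linear part
  obtain ⟨μ, hμnn, hμeq⟩ := duality L hrec (fun i => -(∑ j, L j i))
  set t : Fin m → ℝ := fun j => 1 + μ j with htdef
  have ht : ∀ j, 0 < t j := fun j => by have := hμnn j; simp only [htdef]; linarith
  have hLt : ∀ i, ∑ j, t j * L j i = 0 := by
    intro i
    have h1 := congrFun hμeq i
    simp only [Finset.sum_apply, Pi.smul_apply, smul_eq_mul] at h1
    have h2 : ∑ j, t j * L j i = ∑ j, L j i + ∑ j, μ j * L j i := by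
      rw [← Finset.sum_add_distrib]
      apply Finset.sum_congr rfl
      intro j _
      simp only [htdef]
      ring
    rw [h2, ← h1]
    ring
  set cstar : ℝ := ∑ j, t j * c j with hcstardef
  have hsum_t : ∑ j, C (t j) * a j = C cstar := by
    have h1 : ∑ j, C (t j) * a j = ∑ j, C (t j) * (C (c j) + ∑ i, C (L j i) * X i) :=
      Finset.sum_congr rfl (fun j _ => by rw [hdecomp j])
    rw [h1, comb]
    have h2 : ∀ i : Fin d, C (∑ j, t j * L j i) * (X i : MvPolynomial (Fin d) ℝ) = 0 := by
      intro i
      rw [hLt i, map_zero, zero_mul]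
    rw [Finset.sum_congr rfl (fun i _ => h2 i), Finset.sum_const, smul_zero, add_zero]
  have hcstar_nn : 0 ≤ cstar := by
    have h1 := congrArg (eval x0) hsum_t
    rw [map_sum, eval_C] at h1
    rw [← h1]
    apply Finset.sum_nonneg
    intro j _
    rw [map_mul, eval_C]
    exact mul_nonneg (le_of_lt (ht j)) (hx0 j)
  rcases eq_or_lt_of_le hcstar_nn with hczero | hcpos
  -- degenerate case : S = {x0}
  · have hSzero : ∀ x ∈ {x : Fin d → ℝ | ∀ j, 0 ≤ eval x (a j)}, ∀ j, eval x (a j) = 0 := by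
      intro x hx j
      have h1 := congrArg (eval x) hsum_t
      rw [map_sum, eval_C, ← hczero] at h1
      have h2 : ∀ j' ∈ Finset.univ, 0 ≤ eval x (C (t j') * a j') := by
        intro j' _
        rw [map_mul, eval_C]
        exact mul_nonneg (le_of_lt (ht j')) (hx j')
      have h3 := (Finset.sum_eq_zero_iff_of_nonneg h2).mp h1 j (Finset.mem_univ j)
      rw [map_mul, eval_C] at h3
      rcases mul_eq_zero.mp h3 with h | h
      · exact absurd h (ne_of_gt (ht j))
      · exact h
    have hc_eq : ∀ j, c j = -∑ i, L j i * x0 i := by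
      intro j
      have := hSzero x0 hx0 j
      rw [heval] at this
      linarith
    -- express ±(X i - x0 i) as nonneg combinations
    have hgen : ∀ w : Fin d → ℝ, (∃ ν : Fin m → ℝ, (∀ j, 0 ≤ ν j) ∧ w = ∑ j, ν j • L j) →
        (∑ j, C ((Classical.choose (duality L hrec w)) j) * a j) = 0 → True := fun _ _ _ => trivial
    have hpm : ∀ w : Fin d → ℝ, ∀ ν : Fin m → ℝ, (w = ∑ j, ν j • L j) →
        ∑ j, C (ν j) * a j = ∑ i, C (w i) * X i - C (∑ i, w i * x0 i) := by
      intro w ν hw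
      have h0 : ∑ j, C (ν j) * a j = ∑ j, C (ν j) * (C (c j) + ∑ i, C (L j i) * X i) :=
        Finset.sum_congr rfl (fun j _ => by rw [hdecomp j])
      rw [h0, comb]
      have hwi : ∀ i, w i = ∑ j, ν j * L j i := by
        intro i
        rw [hw]
        simp [Finset.sum_apply]
      have h1 : (∑ j, ν j * c j) = -∑ i, w i * x0 i := by
        have h1a : ∑ j, ν j * c j = -∑ j, ∑ i, ν j * L j i * x0 i := by
          rw [← Finset.sum_neg_distrib]
          apply Finset.sum_congr rfl
          intro j _
          rw [hc_eq j, mul_neg, Finset.mul_sum]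
          apply congrArg Neg.neg
          apply Finset.sum_congr rfl
          intro i _
          ring
        rw [h1a, Finset.sum_comm]
        apply congrArg Neg.neg
        apply Finset.sum_congr rfl
        intro i _
        rw [hwi i, Finset.sum_mul]
      have h2 : ∀ i : Fin d, C (∑ j, ν j * L j i) * (X i : MvPolynomial (Fin d) ℝ)
          = C (w i) * X i := fun i => by rw [← hwi i]
      rw [h1, Finset.sum_congr rfl (fun i _ => h2 i), map_neg]
      ring
    -- the two generators
    have hXmem : ∀ i, (X i - C (x0 i) : MvPolynomial (Fin d) ℝ) ∈ SCone a
        ∧ (C (x0 i) - X i : MvPolynomial (Fin d) ℝ) ∈ SCone a := by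
      intro i
      set w : Fin d → ℝ := fun i' => if i = i' then 1 else 0 with hwdef
      constructor
      · obtain ⟨ν, hν, hνeq⟩ := duality L hrec w
        have h2 := hpm w ν hνeq
        have h3 : ∑ i', C (w i') * (X i' : MvPolynomial (Fin d) ℝ) = X i := by
          simp [hwdef, ite_smul, apply_ite C]
        have h4 : (∑ i', w i' * x0 i') = x0 i := by simp [hwdef]
        rw [h3, h4] at h2
        rw [← h2]
        apply SConeAux.sum_mem
        intro j _
        exact SConeAux.mul_mem (SConeAux.C_mem (hν j)) (SConeAux.gen_mem j)
      · obtain ⟨ν, hν, hνeq⟩ := duality L hrec (-w)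
        have h2 := hpm (-w) ν hνeq
        have h3 : ∑ i', C ((-w) i') * (X i' : MvPolynomial (Fin d) ℝ) = -X i := by
          simp [hwdef, ite_smul, apply_ite C]
        have h4 : (∑ i', (-w) i' * x0 i') = -x0 i := by simp [hwdef]
        rw [h3, h4] at h2
        rw [map_neg] at h2
        have h5 : ∑ j, C (ν j) * a j = C (x0 i) - X i := by rw [h2]; ring
        rw [← h5]
        apply SConeAux.sum_mem
        intro j _
        exact SConeAux.mul_mem (SConeAux.C_mem (hν j)) (SConeAux.gen_mem j)
    -- taylor expansion of f at x0
    set h : MvPolynomial (Fin d) ℝ := aeval (fun i => X i + C (x0 i)) f with hhdef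
    have hcompf : aeval (fun i => X i - C (x0 i)) h = f := by
      rw [hhdef, aeval_comp]
      have : (fun i => aeval (fun i' => (X i' - C (x0 i') : MvPolynomial (Fin d) ℝ))
          ((X i + C (x0 i) : MvPolynomial (Fin d) ℝ))) = X := by
        funext i
        simp [aeval_C]
      rw [this, aeval_X_left]
      simp
    have hconst : coeff 0 h = eval x0 f := by
      have h1 : eval (fun _ => (0:ℝ)) h = eval x0 f := by
        rw [hhdef, eval_aeval]
        have h1b : (fun k => eval (fun _ => (0:ℝ))
            ((X k + C (x0 k) : MvPolynomial (Fin d) ℝ))) = x0 := by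
          funext i
          simp
        rw [h1b]
      rw [← h1]
      rw [eval_eq']
      rw [Finset.sum_eq_single (0 : Fin d →₀ ℕ)]
      · simp
      · intro b _ hb
        obtain ⟨i, hi⟩ := Finsupp.ne_iff.mp hb
        simp only [Finsupp.coe_zero, Pi.zero_apply] at hi
        rw [Finset.prod_eq_zero (Finset.mem_univ i) (by rw [zero_pow hi]), mul_zero]
      · intro h0
        rw [MvPolynomial.notMem_support_iff.mp h0, zero_mul]
    -- f as a sum over the support of h
    have hfsum : f = ∑ α ∈ h.support,
        C (coeff α h) * ∏ i, (X i - C (x0 i) : MvPolynomial (Fin d) ℝ) ^ α i := by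
      conv_lhs => rw [← hcompf, h.as_sum]
      rw [map_sum]
      apply Finset.sum_congr rfl
      intro α _
      rw [aeval_monomial]
      rw [MvPolynomial.algebraMap_eq]
      congr 1
      rw [Finsupp.prod]
      apply Finset.prod_subset (Finset.subset_univ _)
      intro i _ hi
      rw [Finsupp.notMem_support_iff.mp hi, pow_zero]
    rw [hfsum]
    apply SConeAux.sum_mem
    intro α hα
    by_cases hα0 : α = 0
    · subst hα0
      simp only [Finsupp.coe_zero, Pi.zero_apply, pow_zero, Finset.prod_const_one, mul_one]
      apply SConeAux.C_mem
      rw [hconst]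
      exact le_of_lt (hf x0 hx0)
    · rcases le_or_gt 0 (coeff α h) with hcnn | hcneg
      · exact SConeAux.mul_mem (SConeAux.C_mem hcnn)
          (SConeAux.prod_mem _ _ fun i _ => SConeAux.pow_mem (hXmem i).1 _)
      · obtain ⟨i0, hi0⟩ := Finsupp.ne_iff.mp hα0
        simp only [Finsupp.coe_zero, Pi.zero_apply] at hi0
        have hsplit : ∏ i, (X i - C (x0 i) : MvPolynomial (Fin d) ℝ) ^ α i
            = (X i0 - C (x0 i0)) * ((X i0 - C (x0 i0)) ^ (α i0 - 1) *
                ∏ i ∈ Finset.univ.erase i0, (X i - C (x0 i)) ^ α i) := by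
          rw [← Finset.mul_prod_erase Finset.univ _ (Finset.mem_univ i0), ← mul_assoc,
            ← pow_succ']
          congr 2
          omega
        have heq : C (coeff α h) * ∏ i, (X i - C (x0 i) : MvPolynomial (Fin d) ℝ) ^ α i
            = (C (-(coeff α h)) * (C (x0 i0) - X i0)) * ((X i0 - C (x0 i0)) ^ (α i0 - 1) *
                ∏ i ∈ Finset.univ.erase i0, (X i - C (x0 i)) ^ α i) := by
          rw [hsplit, map_neg]
          ring
        rw [heq]
        exact SConeAux.mul_mem
          (SConeAux.mul_mem (SConeAux.C_mem (by linarith)) (hXmem i0).2)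
          (SConeAux.mul_mem (SConeAux.pow_mem (hXmem i0).1 _)
            (SConeAux.prod_mem _ _ fun i _ => SConeAux.pow_mem (hXmem i).1 _))
  -- main case
  · have hm0 : 0 < m := by
      rcases Nat.eq_zero_or_pos m with hm00 | hm00
      · exfalso
        have : cstar = 0 := by
          rw [hcstardef]
          subst hm00
          simp
        linarith
      · exact hm00
    set p : Fin m → MvPolynomial (Fin d) ℝ := fun j => C (t j / cstar) * a j with hpdef
    set u : Fin m → ℝ := fun j => t j / cstar * c j with hudef
    set w' : Fin m → Fin d → ℝ := fun j i => t j / cstar * L j i with hw'def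
    have hpdecomp : ∀ j, p j = C (u j) + ∑ i, C (w' j i) * X i := by
      intro j
      show C (t j / cstar) * a j = _
      conv_lhs => rw [hdecomp j]
      rw [mul_add, ← C_mul, Finset.mul_sum]
      congr 1
      apply Finset.sum_congr rfl
      intro i _
      rw [← mul_assoc, ← C_mul]
    have hpsum : ∑ j, p j = 1 := by
      have h1 : ∑ j, p j = ∑ j, C (t j / cstar) * (C (c j) + ∑ i, C (L j i) * X i) :=
        Finset.sum_congr rfl (fun j _ => by rw [show p j = C (t j / cstar) * a j from rfl, hdecomp j])
      rw [h1, comb]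
      have hconstpart : ∑ j, t j / cstar * c j = 1 := by
        have h2 : ∑ j, t j / cstar * c j = (∑ j, t j * c j) / cstar := by
          rw [Finset.sum_div]
          apply Finset.sum_congr rfl
          intro j _
          ring
        rw [h2, ← hcstardef, div_self (ne_of_gt hcpos)]
      have hlinpart : ∀ i : Fin d, C (∑ j, t j / cstar * L j i) * (X i : MvPolynomial (Fin d) ℝ) = 0 := by
        intro i
        have h3 : ∑ j, t j / cstar * L j i = (∑ j, t j * L j i) / cstar := by
          rw [Finset.sum_div]
          apply Finset.sum_congr rfl
          intro j _
          ring
        rw [h3, hLt i, zero_div, map_zero, zero_mul]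
      rw [hconstpart, Finset.sum_congr rfl (fun i _ => hlinpart i), Finset.sum_const, smul_zero,
        add_zero, map_one]
    have hpeval : ∀ (x : Fin d → ℝ) j, eval x (p j) = t j / cstar * eval x (a j) := by
      intro x j
      show eval x (C (t j / cstar) * a j) = _
      rw [map_mul, eval_C]
    have hpmem : ∀ j, p j ∈ SCone a := by
      intro j
      exact SConeAux.mul_mem
        (SConeAux.C_mem (le_of_lt (div_pos (ht j) hcpos))) (SConeAux.gen_mem j)
    -- recover coordinates from the p's
    have hν : ∀ i : Fin d, ∃ ν : Fin m → ℝ,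
        ∀ i', (if i = i' then (1:ℝ) else 0) = ∑ j, ν j * L j i' := by
      intro i
      obtain ⟨ν, _, hνeq⟩ := duality L hrec (fun i' => if i = i' then 1 else 0)
      refine ⟨ν, fun i' => ?_⟩
      have := congrFun hνeq i'
      simpa [Finset.sum_apply] using this
    choose ν hνeq using hν
    set ν' : Fin d → Fin m → ℝ := fun i j => ν i j * cstar / t j with hν'def
    have hν'L : ∀ i i', (∑ j, ν' i j * w' j i') = if i = i' then 1 else 0 := by
      intro i i'
      have hstep : ∀ j, ν' i j * w' j i' = ν i j * L j i' := by
        intro j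
        have h0 : t j ≠ 0 := ne_of_gt (ht j)
        have h1 : cstar ≠ 0 := ne_of_gt hcpos
        show ν i j * cstar / t j * (t j / cstar * L j i') = ν i j * L j i'
        field_simp
      rw [Finset.sum_congr rfl (fun j _ => hstep j), ← hνeq i i']
    set bb : Fin d → ℝ := fun i => -∑ j, ν' i j * u j with hbbdef
    set q : Fin d → MvPolynomial (Fin m) ℝ := fun i => C (bb i) + ∑ j, C (ν' i j) * X j
      with hqdef
    have hq : ∀ i, aeval p (q i) = X i := by
      intro i
      show aeval p (C (bb i) + ∑ j, C (ν' i j) * X j) = X i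
      simp only [map_add, map_sum, map_mul, aeval_C, aeval_X, MvPolynomial.algebraMap_eq]
      have h1 : ∑ j, C (ν' i j) * p j
          = ∑ j, C (ν' i j) * (C (u j) + ∑ i', C (w' j i') * X i') :=
        Finset.sum_congr rfl (fun j _ => by rw [hpdecomp j])
      rw [h1, comb]
      have h2 : ∀ i' : Fin d, C (∑ j, ν' i j * w' j i') * (X i' : MvPolynomial (Fin d) ℝ)
          = C (if i = i' then (1:ℝ) else 0) * X i' := fun i' => by rw [hν'L i i']
      rw [Finset.sum_congr rfl (fun i' _ => h2 i')]
      have h3 : ∑ i' : Fin d, C (if i = i' then (1:ℝ) else 0) * (X i' : MvPolynomial (Fin d) ℝ)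
          = X i := by
        simp [apply_ite C]
      rw [h3]
      have h4 : bb i = -∑ j, ν' i j * u j := rfl
      rw [h4, map_neg]
      ring
    set G0 : MvPolynomial (Fin m) ℝ := aeval q f with hG0def
    have hG0p : aeval p G0 = f := by
      rw [hG0def, aeval_comp, show (fun i => aeval p (q i)) = X from funext hq, aeval_X_left]
      simp
    set n : ℕ := G0.totalDegree + 2 with hndef
    set TT : MvPolynomial (Fin m) ℝ := ∑ k, X k with hTTdef
    have hTThom : TT.IsHomogeneous 1 := by
      apply MvPolynomial.IsHomogeneous.sum
      intro k _
      exact isHomogeneous_X _ _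
    have hTTp : aeval p TT = 1 := by
      rw [hTTdef, map_sum]
      simp only [aeval_X]
      exact hpsum
    have hTTy : ∀ y : Fin m → ℝ, (∑ k, y k) = 1 → eval y TT = 1 := by
      intro y hy
      rw [hTTdef, map_sum]
      simpa using hy
    set G1 : MvPolynomial (Fin m) ℝ :=
      ∑ α ∈ G0.support, monomial α (coeff α G0) * TT ^ (n - α.degree) with hG1def
    have hdegle : ∀ α ∈ G0.support, α.degree ≤ n := by
      intro α hα
      have h4 : (α.sum fun _ e => e) ≤ G0.totalDegree := le_totalDegree hα
      have h5 : α.degree = α.sum fun _ e => e := rfl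
      omega
    have hG1hom : G1.IsHomogeneous n := by
      apply MvPolynomial.IsHomogeneous.sum
      intro α hα
      have h20 := (isHomogeneous_monomial (d := α) (coeff α G0) rfl).mul
        (hTThom.pow (n - α.degree))
      have h21 : α.degree + 1 * (n - α.degree) = n := by
        have := hdegle α hα
        omega
      rw [h21] at h20
      exact h20
    have hG1p : aeval p G1 = f := by
      rw [hG1def, map_sum]
      rw [Finset.sum_congr rfl (fun α (_ : α ∈ G0.support) => by
        rw [map_mul, map_pow, hTTp, one_pow, mul_one])]
      rw [← map_sum, ← G0.as_sum, hG0p]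
    have hG1eval : ∀ y : Fin m → ℝ, (∑ k, y k) = 1 → eval y G1 = eval y G0 := by
      intro y hy
      rw [hG1def, map_sum]
      rw [Finset.sum_congr rfl (fun α (_ : α ∈ G0.support) => by
        rw [map_mul, map_pow, hTTy y hy, one_pow, mul_one])]
      rw [← map_sum, ← G0.as_sum]
    -- relation polynomials
    set e0 : Fin m → ℝ := fun j => u j + ∑ i, w' j i * bb i with he0def
    set E : Fin m → Fin m → ℝ :=
      fun j k => (∑ i, w' j i * ν' i k) - (if j = k then 1 else 0) with hEdef
    have hlform : ∀ j, aeval q (p j) - X j = C (e0 j) + ∑ k, C (E j k) * X k := by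
      intro j
      have h6 : aeval q (p j) = C (u j) + ∑ i, C (w' j i) * q i := by
        conv_lhs => rw [hpdecomp j]
        simp only [map_add, map_sum, map_mul, aeval_C, aeval_X, MvPolynomial.algebraMap_eq]
      have h7 : ∑ i, C (w' j i) * q i
          = ∑ i, C (w' j i) * (C (bb i) + ∑ k, C (ν' i k) * X k) := by
        apply Finset.sum_congr rfl
        intro i _
        rfl
      rw [h6, h7, comb]
      have h8 : (X j : MvPolynomial (Fin m) ℝ)
          = ∑ k, C (if j = k then (1:ℝ) else 0) * X k := by
        simp [apply_ite C]
      have h9 : ∑ k, C (E j k) * (X k : MvPolynomial (Fin m) ℝ)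
          = (∑ k, C (∑ i, w' j i * ν' i k) * X k)
            - ∑ k, C (if j = k then (1:ℝ) else 0) * X k := by
        rw [← Finset.sum_sub_distrib]
        apply Finset.sum_congr rfl
        intro k _
        have hE : E j k = (∑ i, w' j i * ν' i k) - (if j = k then 1 else 0) := rfl
        rw [hE, map_sub, sub_mul]
      have he0 : e0 j = u j + ∑ i, w' j i * bb i := rfl
      rw [h9, ← h8, he0, map_add]
      ring
    have hrel : ∀ j, (C (e0 j) : MvPolynomial (Fin d) ℝ) + ∑ k, C (E j k) * p k = 0 := by
      intro j
      have h10 := congrArg (aeval p) (hlform j)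
      have h11 : aeval p (aeval q (p j)) = p j := by
        rw [aeval_comp, show (fun i => aeval p (q i)) = X from funext hq, aeval_X_left]
        simp
      rw [map_sub, h11, aeval_X, sub_self] at h10
      have h12 : aeval p (C (e0 j) + ∑ k, C (E j k) * X k)
          = C (e0 j) + ∑ k, C (E j k) * p k := by
        simp only [map_add, map_sum, map_mul, aeval_C, aeval_X, MvPolynomial.algebraMap_eq]
      rw [h12] at h10
      exact h10.symm
    set lh : Fin m → MvPolynomial (Fin m) ℝ :=
      fun j => C (e0 j) * TT + ∑ k, C (E j k) * X k with hlhdef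
    have hlhom : ∀ j, (lh j).IsHomogeneous 1 := by
      intro j
      apply MvPolynomial.IsHomogeneous.add
      · exact hTThom.C_mul _
      · apply MvPolynomial.IsHomogeneous.sum
        intro k _
        exact isHomogeneous_C_mul_X _ _
    have hlhp : ∀ j, aeval p (lh j) = 0 := by
      intro j
      show aeval p (C (e0 j) * TT + ∑ k, C (E j k) * X k) = 0
      simp only [map_add, map_sum, map_mul, aeval_C, aeval_X, MvPolynomial.algebraMap_eq]
      rw [hTTp, mul_one]
      exact hrel j
    have hleval : ∀ (y : Fin m → ℝ), (∑ k, y k) = 1 → ∀ j,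
        eval y (lh j) = eval y (aeval q (p j)) - y j := by
      intro y hy j
      have h12 : eval y (lh j) = e0 j * eval y TT + ∑ k, E j k * y k := by
        show eval y (C (e0 j) * TT + ∑ k, C (E j k) * X k) = _
        simp only [map_add, map_sum, map_mul, eval_C, eval_X]
      have h13 : eval y (aeval q (p j)) - y j = e0 j + ∑ k, E j k * y k := by
        have h14 := congrArg (eval y) (hlform j)
        rw [map_sub, eval_X] at h14
        rw [h14]
        simp only [map_add, map_sum, map_mul, eval_C, eval_X]
      rw [h12, h13, hTTy y hy, mul_one]
    -- choose the penalty constant M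
    set Phi : (Fin m → ℝ) → ℝ := fun y => ∑ j, (eval y (lh j))^2 with hPhidef
    have hPhinn : ∀ y, 0 ≤ Phi y :=
      fun y => Finset.sum_nonneg fun j _ => sq_nonneg _
    have hPhicont : Continuous Phi := by
      apply continuous_finset_sum
      intro j _
      exact (MvPolynomial.continuous_eval (lh j)).pow 2
    have hPhipos : ∀ y : Fin m → ℝ, (∀ k, 0 ≤ y k) → (∑ k, y k) = 1 →
        Phi y = 0 → 0 < eval y G1 := by
      intro y hy1 hy2 hPhi0
      have h15 : ∀ j, eval y (lh j) = 0 := by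
        intro j
        have h16 : ∀ j' ∈ Finset.univ, (0:ℝ) ≤ (eval y (lh j'))^2 := fun j' _ => sq_nonneg _
        have h17 := (Finset.sum_eq_zero_iff_of_nonneg h16).mp hPhi0 j (Finset.mem_univ j)
        exact pow_eq_zero_iff (n := 2) (by norm_num) |>.mp h17
      set xb : Fin d → ℝ := fun i => eval y (q i) with hxbdef
      have hxb : ∀ j, eval xb (p j) = y j := by
        intro j
        have h18 := hleval y hy2 j
        rw [h15 j] at h18
        have h19 : eval y (aeval q (p j)) = y j := by linarith
        rw [eval_aeval] at h19
        exact h19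
      have hxbS : xb ∈ {x : Fin d → ℝ | ∀ j, 0 ≤ eval x (a j)} := by
        intro j
        have h20 := hxb j
        rw [hpeval] at h20
        have ht0 : t j ≠ 0 := ne_of_gt (ht j)
        have hc0 : cstar ≠ 0 := ne_of_gt hcpos
        have h21 : eval xb (a j) = cstar / t j * y j := by
          rw [← h20]
          field_simp
        rw [h21]
        exact mul_nonneg (le_of_lt (div_pos hcpos (ht j))) (hy1 j)
      have h22 := hf xb hxbS
      rw [hG1eval y hy2]
      have h23 : eval y G0 = eval xb f := by
        rw [hG0def, eval_aeval]
      rw [h23]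
      exact h22
    obtain ⟨M, hMnn, hMpos⟩ : ∃ M : ℝ, 0 ≤ M ∧ ∀ y : Fin m → ℝ, (∀ k, 0 ≤ y k) →
        (∑ k, y k) = 1 → 0 < eval y G1 + M * Phi y := by
      set K : Set (Fin m → ℝ) :=
        {y | (∀ k, 0 ≤ y k) ∧ (∑ k, y k) = 1 ∧ eval y G1 ≤ 0} with hKdef
      have hKcl : IsClosed K := by
        have h24 : K = (⋂ k, {y : Fin m → ℝ | 0 ≤ y k}) ∩
            ({y : Fin m → ℝ | ∑ k, y k = 1} ∩ {y : Fin m → ℝ | eval y G1 ≤ 0}) := by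
          ext y
          simp [hKdef, Set.mem_iInter, and_assoc]
        rw [h24]
        exact IsClosed.inter
          (isClosed_iInter fun k => isClosed_le continuous_const (continuous_apply k))
          (IsClosed.inter
            (isClosed_eq (continuous_finset_sum _ fun k _ => continuous_apply k)
              continuous_const)
            (isClosed_le (MvPolynomial.continuous_eval G1) continuous_const))
      have hKbd : Bornology.IsBounded K := by
        rw [Metric.isBounded_iff_subset_closedBall 0]
        refine ⟨1, fun y hy => ?_⟩
        rw [Metric.mem_closedBall, dist_zero_right, pi_norm_le_iff_of_nonneg zero_le_one]
        intro k
        rw [Real.norm_eq_abs, abs_le]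
        constructor
        · linarith [hy.1 k]
        · calc y k ≤ ∑ k', y k' :=
              Finset.single_le_sum (fun k' _ => hy.1 k') (Finset.mem_univ k)
            _ = 1 := hy.2.1
      have hKcompact : IsCompact K := Metric.isCompact_of_isClosed_isBounded hKcl hKbd
      by_cases hKne : K.Nonempty
      · obtain ⟨yd, hyd, hdmin⟩ := hKcompact.exists_isMinOn hKne hPhicont.continuousOn
        have hdpos : 0 < Phi yd := by
          rcases lt_or_eq_of_le (hPhinn yd) with h | h
          · exact h
          · exfalso
            have h25 := hPhipos yd hyd.1 hyd.2.1 h.symm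
            linarith [hyd.2.2]
        obtain ⟨ym, hym, hmmin⟩ := hKcompact.exists_isMinOn hKne
          (MvPolynomial.continuous_eval G1).continuousOn
        set cmin := eval ym G1 with hcmindef
        refine ⟨max 0 ((1 - cmin)/Phi yd), le_max_left _ _, ?_⟩
        intro y hy1 hy2
        by_cases hyK : eval y G1 ≤ 0
        · have hyKmem : y ∈ K := ⟨hy1, hy2, hyK⟩
          have h14 : Phi yd ≤ Phi y := hdmin hyKmem
          have h15 : cmin ≤ eval y G1 := hmmin hyKmem
          have h16 : (1 - cmin)/Phi yd ≤ max 0 ((1-cmin)/Phi yd) := le_max_right _ _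
          have hM1 : (1 - cmin) ≤ max 0 ((1-cmin)/Phi yd) * Phi yd :=
            (div_le_iff₀ hdpos).mp h16
          have hM2 : max 0 ((1-cmin)/Phi yd) * Phi yd ≤ max 0 ((1-cmin)/Phi yd) * Phi y :=
            mul_le_mul_of_nonneg_left h14 (le_max_left _ _)
          nlinarith
        · push_neg at hyK
          have h26 : 0 ≤ max 0 ((1 - cmin)/Phi yd) * Phi y :=
            mul_nonneg (le_max_left _ _) (hPhinn y)
          linarith
      · refine ⟨0, le_rfl, ?_⟩
        intro y hy1 hy2
        rw [zero_mul, add_zero]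
        by_contra hcon
        push_neg at hcon
        exact hKne ⟨y, hy1, hy2, hcon⟩
    set G2 : MvPolynomial (Fin m) ℝ := G1 + C M * (TT ^ (n-2) * ∑ j, (lh j)^2) with hG2def
    have hn2 : 1 * (n - 2) + (2:ℕ) = n := by
      have : 2 ≤ n := by rw [hndef]; omega
      omega
    have hG2hom : G2.IsHomogeneous n := by
      apply hG1hom.add
      have h17 : (∑ j, (lh j)^2 : MvPolynomial (Fin m) ℝ).IsHomogeneous 2 := by
        apply MvPolynomial.IsHomogeneous.sum
        intro j _
        have h18 := (hlhom j).pow 2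
        rwa [mul_comm 1 2, mul_one] at h18
      have h19 := ((hTThom.pow (n-2)).mul h17).C_mul M
      rwa [hn2] at h19
    have hG2p : aeval p G2 = f := by
      rw [hG2def, map_add, hG1p, map_mul, map_mul, map_pow, hTTp, one_pow, one_mul, map_sum]
      have h30 : ∀ j : Fin m, aeval p ((lh j)^2) = 0 := by
        intro j
        rw [map_pow, hlhp j]
        exact zero_pow two_ne_zero
      rw [Finset.sum_congr rfl (fun j (_ : j ∈ Finset.univ) => h30 j)]
      simp
    have hG2pos : ∀ y : Fin m → ℝ, (∀ k, 0 ≤ y k) → (∑ k, y k) = 1 → 0 < eval y G2 := by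
      intro y hy1 hy2
      rw [hG2def, map_add, map_mul, map_mul, map_pow, eval_C, hTTy y hy2, one_pow, one_mul]
      have h27 : eval y (∑ j, (lh j)^2) = Phi y := by
        rw [map_sum]
        apply Finset.sum_congr rfl
        intro j _
        rw [map_pow]
      rw [h27]
      exact hMpos y hy1 hy2
    obtain ⟨N, hN⟩ := polya hm0 G2 hG2hom hG2pos
    have hfH : aeval p ((∑ k, X k : MvPolynomial (Fin m) ℝ) ^ N * G2) = f := by
      rw [map_mul, map_pow, hTTp, one_pow, one_mul, hG2p]
    rw [← hfH, ((∑ k, X k : MvPolynomial (Fin m) ℝ) ^ N * G2).as_sum, map_sum]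
    apply SConeAux.sum_mem
    intro β hβ
    rw [aeval_monomial, MvPolynomial.algebraMap_eq]
    have h28 : (β.prod fun j k => p j ^ k) = ∏ j, p j ^ β j := by
      rw [Finsupp.prod]
      apply Finset.prod_subset (Finset.subset_univ _)
      intro j _ hj
      rw [Finsupp.notMem_support_iff.mp hj, pow_zero]
    rw [h28]
    exact SConeAux.mul_mem (SConeAux.C_mem (hN β))
      (SConeAux.prod_mem _ _ fun j _ => SConeAux.pow_mem (hpmem j) _)
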